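/- Let φ : (R, 𝔪) → (S, 𝔫) be a local homomorphism of commutative Noetherian local rings such that S is a finitely generated R-module and depth S = 0. Let ℓ be an integer such that (0 :_S 𝔫) is not contained in 𝔫^ℓ, and suppose 𝔪S ⊆ 𝔫^ℓ. Let J^1 → J^2 → J^3 (maps σ, τ) be a sequence of homomorphisms of injective R-modules such that the induced maps Hom_R(R/𝔪, σ) and Hom_R(R/𝔪, τ) are both zero. If the induced sequence Hom_R(S, J^1) → Hom_R(S, J^2) → Hom_R(S, J^3) is exact, then the 0-th Bass number μ_0(𝔪, J^2) = 0. -/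

import Mathlib

open CategoryTheory Limits MonoidalCategory

noncomputable section

set_option maxHeartbeats 1000000
set_option synthInstance.maxHeartbeats 1000000

namespace FrobeniusFlat

/-! ### Monoidal structure on `ℤ`-indexed cochain complexes of modules -/

section MonoidalInstances

variable (R : Type) [CommRing R]

instance (X : ModuleCat R) :
    PreservesColimitsOfSize.{0, 0} ((curriedTensor (ModuleCat R)).obj X) :=
  inferInstanceAs (PreservesColimitsOfSize.{0, 0} (tensorLeft X))

instance (X : ModuleCat R) :
    PreservesColimitsOfSize.{0, 0} ((curriedTensor (ModuleCat R)).flip.obj X) :=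
  preservesColimits_of_natIso
    (NatIso.ofComponents (fun Y => β_ X Y) (by intros; simp) :
      tensorLeft X ≅ (curriedTensor (ModuleCat R)).flip.obj X)

instance : (curriedTensor (ModuleCat R)).Additive where
  map_add := by
    intros
    ext Z : 2
    exact MonoidalPreadditive.add_whiskerRight ..

instance (X : ModuleCat R) : ((curriedTensor (ModuleCat R)).obj X).Additive :=
  inferInstanceAs (tensorLeft X).Additive

end MonoidalInstances

/-- `ℤ`-indexed cochain complexes of `R`-modules.  A homologically indexed complex
`M_*` is regarded as a cochain complex via `Mⁿ := M_{-n}`, so that the `i`-th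
homology `H_i` of a homologically indexed complex is `homology (-i)` of the
corresponding cochain complex. -/
abbrev Cx (R : Type) [CommRing R] := CochainComplex (ModuleCat R) ℤ

variable {R : Type} [CommRing R]

/-- A complex is acyclic if all of its homology vanishes. -/
def Acyclic (Z : Cx R) : Prop := ∀ i : ℤ, IsZero (Z.homology i)

/-- Two complexes are isomorphic in the derived category iff they are connected by a
roof of quasi-isomorphisms. -/
def DerivedIso (F M : Cx R) : Prop :=
  ∃ (Z : Cx R) (s : Z ⟶ F) (t : Z ⟶ M), QuasiIso s ∧ QuasiIso t

/-- A semi-flat (K-flat and degreewise flat) complex. -/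
def SemiFlat (F : Cx R) : Prop :=
  (∀ i : ℤ, Module.Flat R (F.X i)) ∧
    ∀ Z : Cx R, Acyclic Z → Acyclic (F ⊗ Z)

/-- A semi-projective (K-projective and degreewise projective) complex. -/
def SemiProjective (P : Cx R) : Prop :=
  (∀ i : ℤ, Projective (P.X i)) ∧
    ∀ Z : Cx R, Acyclic Z → ∀ g : P ⟶ Z, Nonempty (Homotopy g 0)

/-- A semi-injective (K-injective and degreewise injective) complex. -/
def SemiInjective (I : Cx R) : Prop :=
  (∀ i : ℤ, Injective (I.X i)) ∧
    ∀ Z : Cx R, Acyclic Z → ∀ g : Z ⟶ I, Nonempty (Homotopy g 0)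

/-- `fd_R M ≤ n` : there is a semi-flat resolution of `M` concentrated in
homological degrees `≤ n`, i.e. cohomological degrees `≥ -n`. -/
def FlatDimLE (M : Cx R) (n : ℤ) : Prop :=
  ∃ F : Cx R, SemiFlat F ∧ DerivedIso F M ∧ ∀ j : ℤ, j < -n → IsZero (F.X j)

/-- `M` has finite flat dimension. -/
def HasFiniteFlatDimension (M : Cx R) : Prop := ∃ n : ℤ, FlatDimLE M n

/-- `id_R M ≤ n` : there is a semi-injective resolution of `M` concentrated in
cohomological degrees `≤ n`. -/
def InjDimLE (M : Cx R) (n : ℤ) : Prop :=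
  ∃ I : Cx R, SemiInjective I ∧ DerivedIso M I ∧ ∀ j : ℤ, n < j → IsZero (I.X j)

/-- `M` has finite injective dimension. -/
def HasFiniteInjectiveDimension (M : Cx R) : Prop := ∃ n : ℤ, InjDimLE M n

/-- `H_*(M)` (homologically indexed) vanishes in all degrees `i ≥ t`; that is,
`t > sup H_*(M)`. -/
def SupHomologyLT (M : Cx R) (t : ℤ) : Prop :=
  ∀ i : ℤ, t ≤ i → IsZero (M.homology (-i))

/-- `H^*(M)` (cohomologically indexed) vanishes in all degrees `i ≥ t`; that is,
`t > sup H^*(M)`. -/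
def SupCohomologyLT (M : Cx R) (t : ℤ) : Prop :=
  ∀ i : ℤ, t ≤ i → IsZero (M.homology i)

/-- The homology `H_*(M)` of a homologically indexed complex is bounded above. -/
def HomologyBoundedAbove (M : Cx R) : Prop := ∃ t : ℤ, SupHomologyLT M t

/-- The cohomology `H^*(M)` of a cohomologically indexed complex is bounded above. -/
def CohomologyBoundedAbove (M : Cx R) : Prop := ∃ t : ℤ, SupCohomologyLT M t

/-- The `R`-module `ᵉR` : the ring `R` viewed as a module over itself via the `e`-th
iterate of the Frobenius endomorphism, so `r • s = r^(pᵉ) * s`. -/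
def frobModule (R : Type) [CommRing R] (p : ℕ) [Fact p.Prime] [CharP R p] (e : ℕ) :
    ModuleCat R :=
  (ModuleCat.restrictScalars (iterateFrobenius R p e)).obj (ModuleCat.of R R)

/-- `R` is F-finite : `ᵉR` is a finitely generated `R`-module (for `e = 1`,
equivalently for every `e`). -/
def FFinite (R : Type) [CommRing R] (p : ℕ) [Fact p.Prime] [CharP R p] : Prop :=
  Module.Finite R ↥(frobModule R p 1)

/-- A projective resolution of a module, embedded as a `ℤ`-indexed cochain complex
concentrated in cohomological degrees `≤ 0`.  This is a semi-flat and semi-projective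
complex quasi-isomorphic to the module. -/
def resolutionCx {N : ModuleCat R} (P : ProjectiveResolution N) : Cx R :=
  P.complex.extend ComplexShape.embeddingDownNat

/-- `Tor_i^R(N, M) = 0`, for a module `N` and a complex `M` : the homology in
homological degree `i` (cohomological degree `-i`) of `P ⊗_R M` vanishes, where `P`
is any projective resolution of `N`. -/
def TorVanishes (N : ModuleCat R) (M : Cx R) (i : ℤ) : Prop :=
  ∀ P : ProjectiveResolution N, IsZero ((resolutionCx P ⊗ M).homology (-i))

open CochainComplex.HomComplex in
/-- The `R`-module-valued Hom-complex `Hom_R(F, G)` of two complexes. -/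
def homCx (F G : Cx R) : Cx R where
  X i := ModuleCat.of R (Cochain F G i)
  d i j := ModuleCat.ofHom (δ_hom R F G i j)
  shape i j hij := ModuleCat.hom_ext (LinearMap.ext fun z => δ_shape i j hij z)
  d_comp_d' i j k _ _ := ModuleCat.hom_ext (LinearMap.ext fun z => δ_δ i j k z)

/-- `Ext^i_R(N, M) = 0`, for a module `N` and a complex `M` : the `i`-th cohomology of
`Hom_R(P, M)` vanishes, where `P` is any projective resolution of `N`. -/
def ExtVanishes (N : ModuleCat R) (M : Cx R) (i : ℤ) : Prop :=
  ∀ P : ProjectiveResolution N, IsZero ((homCx (resolutionCx P) M).homology i)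

/-- A module viewed as a complex concentrated in (co)homological degree `0`. -/
def singleCx (N : ModuleCat R) : Cx R :=
  (HomologicalComplex.single (ModuleCat R) (ComplexShape.up ℤ) 0).obj N

/-- Base change of a complex along a ring homomorphism `f : R →+* S`,
i.e. `M ⊗_R S` as a complex of `S`-modules. -/
def extendCx {R S : Type} [CommRing R] [CommRing S] (f : R →+* S) (M : Cx R) : Cx S :=
  ((ModuleCat.extendScalars f).mapHomologicalComplex (ComplexShape.up ℤ)).obj M

/-- Restriction of scalars of a complex along a ring homomorphism `f : R →+* S`. -/
def restrictCx {R S : Type} [CommRing R] [CommRing S] (f : R →+* S) (M : Cx S) : Cx R :=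
  ((ModuleCat.restrictScalars f).mapHomologicalComplex (ComplexShape.up ℤ)).obj M

/-- `T` is (a model of) `Tor_i^R(L, M)` for complexes `L`, `M` : it is the homology in
homological degree `i` of `F ⊗_R M` for some semi-flat resolution `F` of `L`. -/
def IsTorOf (L M : Cx R) (i : ℤ) (T : ModuleCat R) : Prop :=
  ∃ F : Cx R, SemiFlat F ∧ DerivedIso F L ∧ Nonempty (T ≅ (F ⊗ M).homology (-i))

/-- `E` is (a model of) `Ext^i_R(L, M)` for complexes `L`, `M` : it is the `i`-th
cohomology of `Hom_R(P, M)` for some semi-projective resolution `P` of `L`. -/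
def IsExtOf (L M : Cx R) (i : ℤ) (E : ModuleCat R) : Prop :=
  ∃ P : Cx R, SemiProjective P ∧ DerivedIso P L ∧ Nonempty (E ≅ (homCx P M).homology i)

/-- `T` is (a model of) `Tor_i^A(M, N)`, with its natural module structure over the
ring `C` of the second argument : for an `A`-complex `M` and a `C`-complex `N`
(restricted to `A` along `f : A →+* C`), it is the homology in homological degree `i`
of `N ⊗_C (C ⊗_A F) ≅ N ⊗_A F` for some semi-flat resolution `F` of `M` over `A`. -/
def IsTorMixed {A C : Type} [CommRing A] [CommRing C] (f : A →+* C)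
    (M : Cx A) (N : Cx C) (i : ℤ) (T : ModuleCat C) : Prop :=
  ∃ F : Cx A, SemiFlat F ∧ DerivedIso F M ∧
    Nonempty (T ≅ (N ⊗ extendCx f F).homology (-i))

/-- `T` is (a model of) `Tor_i^R(M, ᵉR)`, with its natural `ᵉR`-module structure :
it is the homology in homological degree `i` of `ᵉR ⊗_R F` (extension of scalars of
`F` along `fᵉ : R → ᵉR`, which is the `e`-th Frobenius iterate on the underlying
ring `R` of `ᵉR`) for some semi-flat resolution `F` of `M`. -/
def IsTorFrobTwisted (R : Type) [CommRing R] (p : ℕ) [Fact p.Prime] [CharP R p] (e : ℕ)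
    (M : Cx R) (i : ℤ) (T : ModuleCat R) : Prop :=
  ∃ F : Cx R, SemiFlat F ∧ DerivedIso F M ∧
    Nonempty (T ≅ (extendCx (iterateFrobenius R p e) F).homology (-i))

/-- `E` is (a model of) `Ext^i_R(ᵉR, M)`, with its natural `ᵉR`-module structure :
it is the `i`-th cohomology of `Hom_R(ᵉR, J)` (coextension of scalars of `J` along
`fᵉ : R → ᵉR`) for some semi-injective resolution `J` of `M`. -/
def IsExtFrobTwisted (R : Type) [CommRing R] (p : ℕ) [Fact p.Prime] [CharP R p] (e : ℕ)
    (M : Cx R) (i : ℤ) (E : ModuleCat R) : Prop :=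
  ∃ J : Cx R, SemiInjective J ∧ DerivedIso M J ∧
    Nonempty (E ≅ (((ModuleCat.coextendScalars (iterateFrobenius R p e)).mapHomologicalComplex
      (ComplexShape.up ℤ)).obj J).homology i)

open IsLocalRing

/-- A Noetherian local ring is Cohen–Macaulay if there is a regular sequence in the
maximal ideal whose length equals the Krull dimension of the ring. -/
def IsCohenMacaulayLocalRing (R : Type) [CommRing R] [IsLocalRing R] : Prop :=
  ∃ rs : List R, (∀ x ∈ rs, x ∈ maximalIdeal R) ∧
    RingTheory.Sequence.IsRegular R rs ∧ (rs.length : WithBot ℕ∞) = ringKrullDim R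

/-- The length `λ(M)` of a module, as the Krull dimension of its submodule lattice. -/
def length (R : Type) [CommRing R] (M : Type) [AddCommGroup M] [Module R M] :
    WithBot ℕ∞ :=
  Order.krullDim (Submodule R M)

/-- Interpret a length as a real number (with junk value `0` at `±∞`). -/
def lengthToReal (x : WithBot ℕ∞) : ℝ := ((x.unbotD 0).toNat : ℝ)

/-- The Hilbert–Samuel multiplicity `e(R)` of a `d`-dimensional local ring `R` with
respect to its maximal ideal, as the limit of `d! · λ(R/𝔪ⁿ)/nᵈ`. -/
def hilbertSamuelMultiplicity (R : Type) [CommRing R] [IsLocalRing R] (d : ℕ) : ℝ :=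
  Filter.limUnder Filter.atTop fun n : ℕ =>
    (d.factorial : ℝ) * lengthToReal (length R (R ⧸ (maximalIdeal R ^ n))) / (n : ℝ) ^ d

/-- A regular local ring : a Noetherian local ring whose maximal ideal is generated
by `dim R` elements. -/
def IsRegularLocalRing (Q : Type) [CommRing Q] [IsLocalRing Q] : Prop :=
  IsNoetherianRing Q ∧
    ∃ s : Finset Q, Ideal.span (s : Set Q) = maximalIdeal Q ∧
      (s.card : WithBot ℕ∞) = ringKrullDim Q

/-- A presentation of the `𝔪`-adic completion of `R` as a quotient of a complete
regular local ring by a regular sequence. -/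
structure CompleteIntersectionPresentation (R : Type) [CommRing R] [IsLocalRing R] where
  /-- the complete regular local ring -/
  Q : Type
  [commRing : CommRing Q]
  [localRing : IsLocalRing Q]
  regular : IsRegularLocalRing Q
  complete : IsAdicComplete (maximalIdeal Q) Q
  /-- the regular sequence -/
  rs : List Q
  mem_max : ∀ x ∈ rs, x ∈ maximalIdeal Q
  isRegSeq : RingTheory.Sequence.IsRegular Q rs
  /-- the presentation of the completion of `R` -/
  equiv : AdicCompletion (maximalIdeal R) R ≃+* (Q ⧸ Ideal.span {x | x ∈ rs})

/-- `R` is a local complete intersection : its `𝔪`-adic completion is the quotient of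
a complete regular local ring by a regular sequence. -/
def IsCompleteIntersectionLocalRing (R : Type) [CommRing R] [IsLocalRing R] : Prop :=
  Nonempty (CompleteIntersectionPresentation R)

/-- Lemma 4.4.
Let `φ : (R, 𝔪) → (S, 𝔫)` be a local homomorphism of commutative Noetherian local
rings such that `S` is a finitely generated `R`-module and `depth S = 0` (i.e., the
socle `(0 :_S 𝔫)` is nonzero).  Let `ℓ` be an integer such that `(0 :_S 𝔫)` is not
contained in `𝔫^ℓ`, and suppose `𝔪S ⊆ 𝔫^ℓ`.  Let `J¹ → J² → J³` (maps `σ`, `τ`) be a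
sequence of homomorphisms of injective `R`-modules such that the induced maps
`Hom_R(R/𝔪, σ)` and `Hom_R(R/𝔪, τ)` are both zero (i.e., `σ` and `τ` vanish on the
socles).  If the induced sequence `Hom_R(S, J¹) → Hom_R(S, J²) → Hom_R(S, J³)` is
exact, then the `0`-th Bass number `μ_0(𝔪, J²) = 0` (i.e., the socle of `J²` is
zero). -/
theorem bass_number_zero_of_hom_exact
    (R S : Type) [CommRing R] [CommRing S]
    [IsNoetherianRing R] [IsNoetherianRing S]
    [IsLocalRing R] [IsLocalRing S]
    [Algebra R S] [IsLocalHom (algebraMap R S)] [Module.Finite R S]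
    (hdepth : (⊥ : Submodule S S).colon (IsLocalRing.maximalIdeal S) ≠ ⊥)
    (l : ℕ)
    (hl : ¬ ((((⊥ : Submodule S S).colon (IsLocalRing.maximalIdeal S)) : Ideal S)
      ≤ IsLocalRing.maximalIdeal S ^ l))
    (hmS : (IsLocalRing.maximalIdeal R).map (algebraMap R S)
      ≤ IsLocalRing.maximalIdeal S ^ l)
    (J1 J2 J3 : Type) [AddCommGroup J1] [Module R J1] [AddCommGroup J2] [Module R J2]
    [AddCommGroup J3] [Module R J3]
    (hJ1 : Module.Injective R J1) (hJ2 : Module.Injective R J2)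
    (hJ3 : Module.Injective R J3)
    (sigma : J1 →ₗ[R] J2) (tau : J2 →ₗ[R] J3)
    (hsigma : ∀ x : J1, (∀ r ∈ IsLocalRing.maximalIdeal R, r • x = 0) → sigma x = 0)
    (htau : ∀ x : J2, (∀ r ∈ IsLocalRing.maximalIdeal R, r • x = 0) → tau x = 0)
    (hexact : ∀ g : S →ₗ[R] J2, tau.comp g = 0 ↔ ∃ h : S →ₗ[R] J1, sigma.comp h = g) :
    ∀ x : J2, (∀ r ∈ IsLocalRing.maximalIdeal R, r • x = 0) → x = 0 := by
  intro x hx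
  classical
  -- pick a socle element `s` of `S` not in `𝔫^l`
  obtain ⟨s, hs_colon, hs_nl⟩ := SetLike.not_le_iff_exists.mp hl
  -- the quotient `W = S / 𝔫^l` as an `R`-module
  set N : Submodule R S :=
    Submodule.restrictScalars R ((IsLocalRing.maximalIdeal S ^ l : Ideal S)) with hN
  set W := S ⧸ N
  set sbar : W := N.mkQ s with hsbar
  set K : Ideal R := LinearMap.ker (LinearMap.toSpanSingleton R W sbar) with hKdef
  have hK : K ≤ LinearMap.ker (LinearMap.toSpanSingleton R J2 x) := by
    intro r hr
    simp only [hKdef, LinearMap.mem_ker, LinearMap.toSpanSingleton_apply] at hr ⊢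
    by_cases hrm : r ∈ IsLocalRing.maximalIdeal R
    · exact hx r hrm
    · exfalso
      have hru : IsUnit r := by
        simpa [IsLocalRing.mem_maximalIdeal, mem_nonunits_iff, not_not] using hrm
      have hrs : r • s ∈ (IsLocalRing.maximalIdeal S ^ l : Ideal S) := by
        have : r • sbar = N.mkQ (r • s) := by simp [hsbar]
        rw [this] at hr
        exact (Submodule.Quotient.mk_eq_zero N).mp hr
      rw [Algebra.smul_def] at hrs
      have hunit : IsUnit (algebraMap R S r) := hru.map (algebraMap R S)
      exact hs_nl ((Ideal.unit_mul_mem_iff_mem _ hunit).mp hrs)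
  -- build `g : S →ₗ[R] J2` with `g s = x`, factoring through `W`
  have hιinj : Function.Injective (K.liftQ (LinearMap.toSpanSingleton R W sbar) le_rfl) := by
    rw [← LinearMap.ker_eq_bot]
    exact Submodule.ker_liftQ_eq_bot _ _ _ le_rfl
  obtain ⟨h, hh⟩ := hJ2.out (K.liftQ (LinearMap.toSpanSingleton R W sbar) le_rfl) hιinj
    (K.liftQ (LinearMap.toSpanSingleton R J2 x) hK)
  set g : S →ₗ[R] J2 := h.comp N.mkQ with hg
  have hgs : g s = x := by
    have := hh (Submodule.Quotient.mk (1 : R))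
    rw [Submodule.liftQ_apply, Submodule.liftQ_apply, LinearMap.toSpanSingleton_apply,
      LinearMap.toSpanSingleton_apply, one_smul, one_smul] at this
    exact this
  -- the image of `g` lies in the socle of `J2`
  have hsocle : ∀ s' : S, ∀ r ∈ IsLocalRing.maximalIdeal R, r • g s' = 0 := by
    intro s' r hr
    have hmem : r • s' ∈ N := by
      rw [Algebra.smul_def]
      exact Ideal.mul_mem_right s' _ (hmS (Ideal.mem_map_of_mem _ hr))
    calc r • g s' = g (r • s') := (g.map_smul r s').symm
      _ = h (N.mkQ (r • s')) := rfl
      _ = h 0 := by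
          have hz : N.mkQ (r • s') = 0 := (Submodule.Quotient.mk_eq_zero N).mpr hmem
          rw [hz]
      _ = 0 := h.map_zero
  -- hence `τ ∘ g = 0`, so exactness gives `h'` with `σ ∘ h' = g`
  have htg : tau.comp g = 0 := by
    ext s'
    exact htau (g s') (hsocle s')
  obtain ⟨h', hh'⟩ := (hexact g).mp htg
  -- `h' s` lies in the socle of `J1`, so `x = σ (h' s) = 0`
  have hh's : ∀ r ∈ IsLocalRing.maximalIdeal R, r • h' s = 0 := by
    intro r hr
    have hrn : algebraMap R S r ∈ IsLocalRing.maximalIdeal S := by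
      rw [IsLocalRing.mem_maximalIdeal, mem_nonunits_iff] at hr ⊢
      intro hu
      exact hr (IsUnit.of_map (algebraMap R S) r hu)
    have hzero : r • s = 0 := by
      rw [Algebra.smul_def]
      have := Submodule.mem_colon.mp hs_colon (algebraMap R S r) hrn
      simpa [smul_eq_mul, mul_comm] using this
    calc r • h' s = h' (r • s) := (h'.map_smul r s).symm
      _ = h' 0 := by rw [hzero]
      _ = 0 := h'.map_zero
  have : sigma (h' s) = 0 := hsigma (h' s) hh's
  calc x = g s := hgs.symm
    _ = sigma (h' s) := by rw [← hh']; rfl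
    _ = 0 := this

end FrobeniusFlat

end
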